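/- Let h ∈ ℝ^(2^n) and suppose h ∉ cl Γ_n^*. Then there exists a vector c ∈ ℝ^(2^n) with integer coordinates such that c·h₀ ≥ 0 for every entropic vector h₀ ∈ Γ_n^*, while c·h < 0. In other words, every vector that is not almost entropic is separated from the entropic vectors by an information inequality with integral coefficients. -/

import Mathlib

/-- The marginal probability `q_α(v)` of the joint outcome `v` of the variables in `α`. -/
noncomputable def marginalProb {n N : ℕ} (p : Fin N → ℝ) (X : Fin n → Fin N → ℕ)
    (α : Finset (Fin n)) (v : {i // i ∈ α} → ℕ) : ℝ :=
  ∑ ω ∈ Finset.univ.filter (fun ω => ∀ i : {i // i ∈ α}, X i.1 ω = v i), p ω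

/-- The base-2 Shannon entropy of the joint marginal distribution on `α`. -/
noncomputable def entropyOn {n N : ℕ} (p : Fin N → ℝ) (X : Fin n → Fin N → ℕ)
    (α : Finset (Fin n)) : ℝ :=
  (∑' v : ({i // i ∈ α} → ℕ), Real.negMulLog (marginalProb p X α v)) / Real.log 2

/-- `h : Finset (Fin n) → ℝ` is entropic if it is the entropy profile of `n` jointly
distributed random variables on a nonempty finite probability space. -/
def IsEntropic (n : ℕ) (h : Finset (Fin n) → ℝ) : Prop :=
  ∃ (N : ℕ) (p : Fin N → ℝ) (X : Fin n → Fin N → ℕ), 0 < N ∧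
    (∀ ω, 0 ≤ p ω) ∧ (∑ ω, p ω) = 1 ∧ ∀ α, h α = entropyOn p X α

/-- The closed convex cone `cl Γ_n^*` of almost entropic vectors. -/
def almostEntropic (n : ℕ) : Set (Finset (Fin n) → ℝ) :=
  closure {h | IsEntropic n h}

open Finset Real

section Basic

variable {n N : ℕ} (p : Fin N → ℝ) (X : Fin n → Fin N → ℕ) (α : Finset (Fin n))

/-- The joint outcome map. -/
def jointMap (X : Fin n → Fin N → ℕ) (α : Finset (Fin n)) (ω : Fin N) :
    {i // i ∈ α} → ℕ := fun i => X i.1 ω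

lemma marginalProb_eq_sum_filter (v : {i // i ∈ α} → ℕ) :
    marginalProb p X α v = ∑ ω ∈ Finset.univ.filter (fun ω => jointMap X α ω = v), p ω := by
  unfold marginalProb jointMap
  congr 1
  ext ω
  simp [funext_iff]

lemma marginalProb_of_not_mem {v : {i // i ∈ α} → ℕ}
    (hv : v ∉ Finset.univ.image (jointMap X α)) : marginalProb p X α v = 0 := by
  rw [marginalProb_eq_sum_filter]
  apply Finset.sum_eq_zero
  intro ω hω
  rcases Finset.mem_filter.1 hω with ⟨-, h⟩
  exact absurd (h ▸ Finset.mem_image_of_mem (jointMap X α) (Finset.mem_univ ω)) hv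

lemma entropyOn_eq_sum {S : Finset ({i // i ∈ α} → ℕ)}
    (hS : Finset.univ.image (jointMap X α) ⊆ S) :
    entropyOn p X α = (∑ v ∈ S, Real.negMulLog (marginalProb p X α v)) / Real.log 2 := by
  unfold entropyOn
  congr 1
  apply tsum_eq_sum
  intro v hv
  rw [marginalProb_of_not_mem p X α (fun hmem => hv (hS hmem))]
  simp

lemma sum_marginalProb {S : Finset ({i // i ∈ α} → ℕ)}
    (hS : Finset.univ.image (jointMap X α) ⊆ S) :
    ∑ v ∈ S, marginalProb p X α v = ∑ ω, p ω := by
  have := Finset.sum_fiberwise_of_maps_to (s := (Finset.univ : Finset (Fin N))) (t := S)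
    (g := jointMap X α) (fun ω _ => hS (Finset.mem_image_of_mem _ (Finset.mem_univ ω))) p
  rw [← this]
  refine Finset.sum_congr rfl fun v _ => ?_
  rw [marginalProb_eq_sum_filter]

lemma marginalProb_nonneg (hp : ∀ ω, 0 ≤ p ω) (v : {i // i ∈ α} → ℕ) :
    0 ≤ marginalProb p X α v :=
  Finset.sum_nonneg fun ω _ => hp ω

lemma marginalProb_le_one (hp : ∀ ω, 0 ≤ p ω) (hp1 : ∑ ω, p ω = 1) (v : {i // i ∈ α} → ℕ) :
    marginalProb p X α v ≤ 1 := by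
  rw [← hp1]
  exact Finset.sum_le_sum_of_subset_of_nonneg (Finset.filter_subset _ _) fun ω _ _ => hp ω

lemma entropyOn_nonneg (hp : ∀ ω, 0 ≤ p ω) (hp1 : ∑ ω, p ω = 1) :
    0 ≤ entropyOn p X α := by
  apply div_nonneg _ (Real.log_nonneg one_le_two)
  apply tsum_nonneg
  intro v
  exact Real.negMulLog_nonneg (marginalProb_nonneg p X α hp v)
    (marginalProb_le_one p X α hp hp1 v)

lemma entropyOn_empty (hp1 : ∑ ω, p ω = 1) : entropyOn p X (∅ : Finset (Fin n)) = 0 := by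
  haveI : IsEmpty {i : Fin n // i ∈ (∅ : Finset (Fin n))} := ⟨fun i => absurd i.2 (Finset.notMem_empty _)⟩
  unfold entropyOn
  rw [tsum_eq_single (fun i => 0) (fun b hb => absurd (Subsingleton.elim b _) hb)]
  have : marginalProb p X ∅ (fun i => 0) = 1 := by
    unfold marginalProb
    rw [Finset.filter_true_of_mem (fun ω _ => fun i => (IsEmpty.false i).elim), hp1]
  rw [this]
  simp

end Basic

section EntropicBasic

variable {n : ℕ} {h : Finset (Fin n) → ℝ}

lemma IsEntropic.nonneg (hh : IsEntropic n h) (α : Finset (Fin n)) : 0 ≤ h α := by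
  obtain ⟨N, p, X, hN, hp, hp1, hα⟩ := hh
  rw [hα]
  exact entropyOn_nonneg p X α hp hp1

lemma IsEntropic.empty_eq (hh : IsEntropic n h) : h ∅ = 0 := by
  obtain ⟨N, p, X, hN, hp, hp1, hα⟩ := hh
  rw [hα, entropyOn_empty p X hp1]

lemma IsEntropic.congr {g : Finset (Fin n) → ℝ} (hh : IsEntropic n h)
    (hg : ∀ α, g α = h α) : IsEntropic n g := by
  obtain ⟨N, p, X, hN, hp, hp1, hα⟩ := hh
  exact ⟨N, p, X, hN, hp, hp1, fun α => (hg α).trans (hα α)⟩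

lemma isEntropic_zero : IsEntropic n (fun _ => 0) := by
  refine ⟨1, fun _ => 1, fun _ _ => 0, Nat.one_pos, fun _ => zero_le_one, by simp, fun α => ?_⟩
  show (0:ℝ) = entropyOn (fun _ => (1:ℝ)) (fun _ _ => (0:ℕ)) α
  rw [entropyOn_eq_sum (fun _ => (1:ℝ)) (fun _ _ => (0:ℕ)) α
    (S := Finset.univ.image (jointMap (fun _ _ => (0:ℕ)) α)) le_rfl]
  have himg : (Finset.univ : Finset (Fin 1)).image (jointMap (fun _ _ => (0:ℕ)) α)
      = {fun _ => 0} := by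
    ext v
    simp only [Finset.mem_image, Finset.mem_univ, true_and, Finset.mem_singleton]
    constructor
    · rintro ⟨ω, rfl⟩; rfl
    · rintro rfl; exact ⟨0, rfl⟩
  rw [himg, Finset.sum_singleton]
  have : marginalProb (N := 1) (fun _ => (1:ℝ)) (fun _ _ => (0:ℕ)) α (fun _ => 0) = 1 := by
    unfold marginalProb
    rw [Finset.filter_true_of_mem (fun ω _ => fun i => rfl)]
    simp
  rw [this]
  simp

end EntropicBasic

section Add

variable {n : ℕ}

lemma sum_prod_helper {A B : Type*} [DecidableEq A] [DecidableEq B]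
    (S₁ : Finset A) (S₂ : Finset B) (f₁ g₁ : A → ℝ) (f₂ g₂ : B → ℝ) :
    ∑ w ∈ S₁ ×ˢ S₂, (f₂ w.2 * g₁ w.1 + f₁ w.1 * g₂ w.2)
      = (∑ b ∈ S₂, f₂ b) * (∑ a ∈ S₁, g₁ a) + (∑ a ∈ S₁, f₁ a) * (∑ b ∈ S₂, g₂ b) := by
  rw [Finset.sum_product]
  simp only [Finset.sum_add_distrib]
  rw [Finset.sum_mul_sum, Finset.sum_mul_sum]
  congr 1
  rw [Finset.sum_comm]

lemma IsEntropic.add {h₁ h₂ : Finset (Fin n) → ℝ} (H1 : IsEntropic n h₁)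
    (H2 : IsEntropic n h₂) : IsEntropic n (fun α => h₁ α + h₂ α) := by
  classical
  obtain ⟨N₁, p₁, X₁, hN₁, hp₁, hs₁, he₁⟩ := H1
  obtain ⟨N₂, p₂, X₂, hN₂, hp₂, hs₂, he₂⟩ := H2
  set e : Fin (N₁ * N₂) ≃ Fin N₁ × Fin N₂ := finProdFinEquiv.symm with he
  set p : Fin (N₁ * N₂) → ℝ := fun ω => p₁ (e ω).1 * p₂ (e ω).2 with hpdef
  set X : Fin n → Fin (N₁ * N₂) → ℕ :=
    fun i ω => Nat.pair (X₁ i (e ω).1) (X₂ i (e ω).2) with hXdef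
  have hsum : ∑ ω, p ω = 1 := by
    rw [hpdef]
    rw [← Equiv.sum_comp e.symm (fun ω => p₁ (e ω).1 * p₂ (e ω).2)]
    simp only [Equiv.apply_symm_apply]
    rw [Fintype.sum_prod_type, ← Finset.sum_mul_sum, hs₁, hs₂, one_mul]
  -- the marginal of the product factorizes
  have hmarg : ∀ (α : Finset (Fin n)) (v : {i // i ∈ α} → ℕ),
      marginalProb p X α v
        = marginalProb p₁ X₁ α (fun i => (v i).unpair.1)
          * marginalProb p₂ X₂ α (fun i => (v i).unpair.2) := by
    intro α v
    unfold marginalProb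
    rw [Finset.sum_filter, Finset.sum_filter, Finset.sum_filter]
    rw [← Equiv.sum_comp e.symm
      (fun ω => if (∀ i : {i // i ∈ α}, X i.1 ω = v i) then p ω else 0)]
    simp only [Equiv.apply_symm_apply]  -- hopefully X/p applied to e (e.symm x)
    rw [Fintype.sum_prod_type, Finset.sum_mul_sum]
    refine Finset.sum_congr rfl fun a _ => Finset.sum_congr rfl fun b _ => ?_
    have hc : (∀ i : {i // i ∈ α}, X i.1 (e.symm (a, b)) = v i)
        ↔ ((∀ i : {i // i ∈ α}, X₁ i.1 a = (v i).unpair.1)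
            ∧ (∀ i : {i // i ∈ α}, X₂ i.1 b = (v i).unpair.2)) := by
      simp only [hXdef, Equiv.apply_symm_apply]
      constructor
      · intro hI
        constructor
        · intro i; rw [← hI i, Nat.unpair_pair]
        · intro i; rw [← hI i, Nat.unpair_pair]
      · rintro ⟨hA, hB⟩ i
        rw [hA i, hB i, Nat.pair_unpair]
    rw [if_congr hc rfl rfl]
    have : p (e.symm (a, b)) = p₁ a * p₂ b := by
      simp only [hpdef, Equiv.apply_symm_apply]
    rw [this]
    by_cases hP : (∀ i : {i // i ∈ α}, X₁ i.1 a = (v i).unpair.1)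
    · by_cases hQ : (∀ i : {i // i ∈ α}, X₂ i.1 b = (v i).unpair.2)
      · rw [if_pos (⟨hP, hQ⟩ : _ ∧ _), if_pos hP, if_pos hQ]
      · rw [if_neg (fun hpq => hQ (And.right hpq)), if_neg hQ, mul_zero]
    · rw [if_neg (fun hpq => hP (And.left hpq)), if_neg hP, zero_mul]
  refine ⟨N₁ * N₂, p, X, Nat.mul_pos hN₁ hN₂,
    fun ω => mul_nonneg (hp₁ _) (hp₂ _), hsum, ?_⟩
  intro α
  show h₁ α + h₂ α = entropyOn p X α
  set S₁ := Finset.univ.image (jointMap X₁ α) with hS₁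
  set S₂ := Finset.univ.image (jointMap X₂ α) with hS₂
  set pairF : (({i // i ∈ α} → ℕ) × ({i // i ∈ α} → ℕ)) → ({i // i ∈ α} → ℕ) :=
    fun w i => Nat.pair (w.1 i) (w.2 i) with hpairF
  set T := (S₁ ×ˢ S₂).image pairF with hT
  have hsub : Finset.univ.image (jointMap X α) ⊆ T := by
    intro v hv
    rcases Finset.mem_image.1 hv with ⟨ω, -, rfl⟩
    apply Finset.mem_image.2
    refine ⟨(jointMap X₁ α (e ω).1, jointMap X₂ α (e ω).2), ?_, rfl⟩
    exact Finset.mem_product.2 ⟨Finset.mem_image_of_mem _ (Finset.mem_univ _),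
      Finset.mem_image_of_mem _ (Finset.mem_univ _)⟩
  rw [entropyOn_eq_sum p X α hsub]
  symm
  have hinj : ∀ w ∈ S₁ ×ˢ S₂, ∀ w' ∈ S₁ ×ˢ S₂, pairF w = pairF w' → w = w' := by
    intro w _ w' _ hww
    have := funext_iff.1 hww
    ext i
    · exact (Nat.pair_eq_pair.1 (this i)).1
    · exact (Nat.pair_eq_pair.1 (this i)).2
  rw [Finset.sum_image hinj]
  have hterm : ∀ w : (({i // i ∈ α} → ℕ) × ({i // i ∈ α} → ℕ)),
      marginalProb p X α (pairF w)
        = marginalProb p₁ X₁ α w.1 * marginalProb p₂ X₂ α w.2 := by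
    intro w
    rw [hmarg]
    congr 1 <;> · congr 1; ext i; simp [hpairF, Nat.unpair_pair]
  calc (∑ w ∈ S₁ ×ˢ S₂, Real.negMulLog (marginalProb p X α (pairF w))) / Real.log 2
      = (∑ w ∈ S₁ ×ˢ S₂, (marginalProb p₂ X₂ α w.2
            * Real.negMulLog (marginalProb p₁ X₁ α w.1)
          + marginalProb p₁ X₁ α w.1
            * Real.negMulLog (marginalProb p₂ X₂ α w.2))) / Real.log 2 := by
        congr 1
        refine Finset.sum_congr rfl fun w _ => ?_
        rw [hterm, Real.negMulLog_mul]
    _ = ((∑ b ∈ S₂, marginalProb p₂ X₂ α b)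
            * (∑ a ∈ S₁, Real.negMulLog (marginalProb p₁ X₁ α a))
          + (∑ a ∈ S₁, marginalProb p₁ X₁ α a)
            * (∑ b ∈ S₂, Real.negMulLog (marginalProb p₂ X₂ α b))) / Real.log 2 := by
        rw [sum_prod_helper S₁ S₂ (fun a => marginalProb p₁ X₁ α a)
          (fun a => Real.negMulLog (marginalProb p₁ X₁ α a))
          (fun b => marginalProb p₂ X₂ α b)
          (fun b => Real.negMulLog (marginalProb p₂ X₂ α b))]
    _ = h₁ α + h₂ α := by
        rw [sum_marginalProb p₁ X₁ α le_rfl, sum_marginalProb p₂ X₂ α le_rfl, hs₁, hs₂,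
          one_mul, one_mul, add_div, ← entropyOn_eq_sum p₁ X₁ α le_rfl,
          ← entropyOn_eq_sum p₂ X₂ α le_rfl, ← he₁, ← he₂]

end Add

section Bernoulli

variable {n : ℕ}

/-- The binary entropy contribution. -/
noncomputable def binEnt (μ : ℝ) : ℝ :=
  (Real.negMulLog μ + Real.negMulLog (1 - μ)) / Real.log 2

lemma binEnt_tendsto : Filter.Tendsto binEnt (nhds 0) (nhds 0) := by
  have hc : Continuous binEnt := by
    unfold binEnt
    fun_prop
  have := hc.tendsto 0
  simpa [binEnt] using this

lemma IsEntropic.bernoulli {h : Finset (Fin n) → ℝ} (hh : IsEntropic n h) {μ : ℝ}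
    (h0 : 0 ≤ μ) (h1 : μ ≤ 1) :
    IsEntropic n (fun α => μ * h α + if α = ∅ then 0 else binEnt μ) := by
  classical
  obtain ⟨N, p, X, hN, hp, hs, heq⟩ := hh
  set p' : Fin (N + 1) → ℝ := Fin.snoc (fun ω => μ * p ω) (1 - μ) with hp'def
  set X' : Fin n → Fin (N + 1) → ℕ := fun i => Fin.snoc (fun ω => X i ω + 1) 0 with hX'def
  have hp'cast : ∀ ω : Fin N, p' ω.castSucc = μ * p ω := fun ω => by
    simp [hp'def, Fin.snoc_castSucc]
  have hp'last : p' (Fin.last N) = 1 - μ := by simp [hp'def, Fin.snoc_last]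
  have hX'cast : ∀ i (ω : Fin N), X' i ω.castSucc = X i ω + 1 := fun i ω => by
    simp [hX'def, Fin.snoc_castSucc]
  have hX'last : ∀ i, X' i (Fin.last N) = 0 := fun i => by simp [hX'def, Fin.snoc_last]
  have hp'nonneg : ∀ ω, 0 ≤ p' ω := by
    intro ω
    induction ω using Fin.lastCases with
    | last => rw [hp'last]; linarith
    | cast ω => rw [hp'cast]; exact mul_nonneg h0 (hp ω)
  have hp'sum : ∑ ω, p' ω = 1 := by
    rw [Fin.sum_univ_castSucc]
    simp only [hp'cast, hp'last, ← Finset.mul_sum, hs]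
    ring
  refine ⟨N + 1, p', X', Nat.succ_pos N, hp'nonneg, hp'sum, ?_⟩
  intro α
  by_cases hα : α = ∅
  · subst hα
    show μ * h ∅ + (if (∅ : Finset (Fin n)) = ∅ then 0 else binEnt μ) = entropyOn p' X' ∅
    rw [if_pos rfl, entropyOn_empty p' X' hp'sum, heq ∅, entropyOn_empty p X hs]
    ring
  · show μ * h α + (if α = ∅ then 0 else binEnt μ) = entropyOn p' X' α
    rw [if_neg hα]
    obtain ⟨i₀, hi₀⟩ := Finset.nonempty_iff_ne_empty.2 hα
    set j₀ : {i // i ∈ α} := ⟨i₀, hi₀⟩ with hj₀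
    set S := Finset.univ.image (jointMap X α) with hS
    set shift : ({i // i ∈ α} → ℕ) → ({i // i ∈ α} → ℕ) := fun w i => w i + 1 with hshift
    set z : {i // i ∈ α} → ℕ := fun _ => 0 with hz
    set T := insert z (S.image shift) with hT
    have hsub : Finset.univ.image (jointMap X' α) ⊆ T := by
      intro v hv
      rcases Finset.mem_image.1 hv with ⟨ω, -, rfl⟩
      induction ω using Fin.lastCases with
      | last =>
        rw [show jointMap X' α (Fin.last N) = z from funext fun i => hX'last i.1]
        exact Finset.mem_insert_self _ _
      | cast ω =>
        have : jointMap X' α ω.castSucc = shift (jointMap X α ω) := by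
          funext i
          exact hX'cast i.1 ω
        rw [this]
        exact Finset.mem_insert_of_mem
          (Finset.mem_image_of_mem _ (Finset.mem_image_of_mem _ (Finset.mem_univ ω)))
    have hlastz : jointMap X' α (Fin.last N) = z := by
      funext i
      exact hX'last i.1
    -- marginal at z
    have hmz : marginalProb p' X' α z = 1 - μ := by
      rw [marginalProb_eq_sum_filter, Finset.sum_filter, Fin.sum_univ_castSucc]
      have hcast0 : ∀ ω : Fin N, ¬ (jointMap X' α ω.castSucc = z) := by
        intro ω hcontr
        have := congrFun hcontr j₀
        rw [show jointMap X' α ω.castSucc j₀ = X j₀.1 ω + 1 from hX'cast j₀.1 ω] at this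
        simp [hz] at this
      rw [if_pos hlastz, hp'last]
      rw [Finset.sum_eq_zero (fun ω _ => if_neg (hcast0 ω)), zero_add]
    -- marginal at shifted values
    have hmshift : ∀ w : {i // i ∈ α} → ℕ,
        marginalProb p' X' α (shift w) = μ * marginalProb p X α w := by
      intro w
      rw [marginalProb_eq_sum_filter, Finset.sum_filter, Fin.sum_univ_castSucc]
      have hlast : ¬ (jointMap X' α (Fin.last N) = shift w) := by
        intro hcontr
        have := congrFun hcontr j₀
        rw [show jointMap X' α (Fin.last N) j₀ = 0 from hX'last j₀.1] at this
        simp [hshift] at this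
      rw [if_neg hlast, add_zero]
      have hcond : ∀ ω : Fin N,
          (jointMap X' α ω.castSucc = shift w) ↔ (jointMap X α ω = w) := by
        intro ω
        rw [funext_iff, funext_iff]
        apply forall_congr'
        intro i
        rw [show jointMap X' α ω.castSucc i = X i.1 ω + 1 from hX'cast i.1 ω]
        exact ⟨fun hh' => by simpa [hshift, jointMap] using hh', fun hh' => by simp [hshift, hh']; exact hh'⟩
      rw [marginalProb_eq_sum_filter, Finset.sum_filter, Finset.mul_sum]
      refine Finset.sum_congr rfl fun ω _ => ?_
      rw [if_congr (hcond ω) rfl rfl, hp'cast]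
      by_cases hc : jointMap X α ω = w
      · rw [if_pos hc, if_pos hc]
      · rw [if_neg hc, if_neg hc, mul_zero]
    -- z is not a shifted value, and shift is injective
    have hznot : z ∉ S.image shift := by
      intro hcontr
      rcases Finset.mem_image.1 hcontr with ⟨w, -, hw⟩
      have := congrFun hw j₀
      simp [hshift, hz] at this
    have hshiftinj : ∀ w ∈ S, ∀ w' ∈ S, shift w = shift w' → w = w' := by
      intro w _ w' _ hww
      funext i
      have := congrFun hww i
      simpa [hshift] using this
    have hlog2 : Real.log 2 ≠ 0 := by
      have := Real.log_pos one_lt_two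
      linarith
    rw [heq α, entropyOn_eq_sum p' X' α hsub, hT, Finset.sum_insert hznot,
      Finset.sum_image hshiftinj, hmz]
    have : ∀ w ∈ S, Real.negMulLog (marginalProb p' X' α (shift w))
        = marginalProb p X α w * Real.negMulLog μ + μ * Real.negMulLog (marginalProb p X α w) := by
      intro w _
      rw [hmshift w, Real.negMulLog_mul]
    rw [Finset.sum_congr rfl this, Finset.sum_add_distrib, ← Finset.sum_mul, ← Finset.mul_sum,
      sum_marginalProb p X α le_rfl, hs, one_mul]
    have hent : ∑ w ∈ S, Real.negMulLog (marginalProb p X α w)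
        = entropyOn p X α * Real.log 2 := by
      rw [entropyOn_eq_sum p X α (le_of_eq hS.symm)]
      field_simp
    rw [hent]
    unfold binEnt
    field_simp
    ring

end Bernoulli

section Closure

variable {n : ℕ}

lemma IsEntropic.nsmul_pos {h : Finset (Fin n) → ℝ} (hh : IsEntropic n h) :
    ∀ k : ℕ, 0 < k → IsEntropic n (fun α => (k : ℝ) * h α) := by
  intro k
  induction k with
  | zero => intro hk; exact absurd hk (lt_irrefl 0)
  | succ k ih =>
    intro _
    rcases Nat.eq_zero_or_pos k with hk0 | hkpos
    · subst hk0
      exact hh.congr fun α => by push_cast; ring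
    · exact ((ih hkpos).add hh).congr fun α => by push_cast; ring

lemma IsEntropic.mul_mem_almostEntropic {h : Finset (Fin n) → ℝ} (hh : IsEntropic n h)
    {t : ℝ} (ht : 0 ≤ t) : (fun α => t * h α) ∈ almostEntropic n := by
  classical
  set m : ℕ := ⌊t⌋₊ + 1 with hm
  have htm : t < (m : ℝ) := by
    rw [hm]; push_cast; exact Nat.lt_floor_add_one t
  have hmpos : (0 : ℝ) < (m : ℝ) := lt_of_le_of_lt ht htm
  set lam : ℝ := t / m with hlam
  have hlam0 : 0 ≤ lam := div_nonneg ht hmpos.le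
  have hlam1 : lam ≤ 1 := (div_le_one hmpos).2 htm.le
  have hlamm : lam * m = t := div_mul_cancel₀ t hmpos.ne'
  set g : ℕ → Finset (Fin n) → ℝ := fun k α =>
    (lam / (k + 1)) * ((((k + 1) * m : ℕ) : ℝ) * h α)
      + if α = ∅ then 0 else binEnt (lam / (k + 1)) with hg
  have hμ0 : ∀ k : ℕ, 0 ≤ lam / ((k : ℝ) + 1) := fun k =>
    div_nonneg hlam0 (by positivity)
  have hμ1 : ∀ k : ℕ, lam / ((k : ℝ) + 1) ≤ 1 := fun k => by
    rw [div_le_one (by positivity)]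
    have : (0 : ℝ) ≤ (k : ℝ) := Nat.cast_nonneg k
    linarith
  have hgmem : ∀ k, IsEntropic n (g k) := by
    intro k
    have hkm : 0 < (k + 1) * m := Nat.mul_pos (Nat.succ_pos k) (Nat.succ_pos _)
    have := (hh.nsmul_pos ((k + 1) * m) hkm).bernoulli (μ := lam / ((k : ℝ) + 1))
      (hμ0 k) (hμ1 k)
    exact this.congr fun α => by rw [hg]
  have hμtend : Filter.Tendsto (fun k : ℕ => lam / ((k : ℝ) + 1)) Filter.atTop (nhds 0) := by
    have h1 : Filter.Tendsto (fun k : ℕ => 1 / ((k : ℝ) + 1)) Filter.atTop (nhds 0) :=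
      tendsto_one_div_add_atTop_nhds_zero_nat
    have := h1.const_mul lam
    rw [mul_zero] at this
    refine this.congr fun k => ?_
    field_simp
  have htend : Filter.Tendsto g Filter.atTop (nhds (fun α => t * h α)) := by
    rw [tendsto_pi_nhds]
    intro α
    have hconst : ∀ k : ℕ, (lam / ((k : ℝ) + 1)) * ((((k + 1) * m : ℕ) : ℝ) * h α)
        = t * h α := by
      intro k
      have hk1 : ((k : ℝ) + 1) ≠ 0 := by positivity
      have h2 : lam / ((k : ℝ) + 1) * ((((k : ℝ)) + 1) * (m : ℝ) * h α)
          = lam * (m : ℝ) * ((((k : ℝ)) + 1) / (((k : ℝ)) + 1)) * h α := by ring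
      rw [Nat.cast_mul, Nat.cast_add_one, h2, div_self hk1, mul_one, hlamm]
    by_cases hα : α = ∅
    · refine Filter.Tendsto.congr (f₁ := fun _ => t * h α) (fun k => ?_) tendsto_const_nhds
      rw [hg]
      simp only []
      rw [if_pos hα, add_zero]
      exact (hconst k).symm
    · have : Filter.Tendsto (fun k : ℕ => t * h α + binEnt (lam / ((k : ℝ) + 1)))
          Filter.atTop (nhds (t * h α + 0)) :=
        tendsto_const_nhds.add (binEnt_tendsto.comp hμtend)
      rw [add_zero] at this
      refine Filter.Tendsto.congr (fun k => ?_) this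
      rw [hg]
      simp only []
      rw [if_neg hα, hconst k]
  exact mem_closure_of_tendsto htend (Filter.Eventually.of_forall fun k => hgmem k)

end Closure

section Final

variable {n : ℕ}

lemma zero_mem_almostEntropic : (0 : Finset (Fin n) → ℝ) ∈ almostEntropic n :=
  subset_closure (show IsEntropic n (0 : Finset (Fin n) → ℝ) from
    isEntropic_zero.congr fun _ => rfl)

lemma smul_mem_almostEntropic {x : Finset (Fin n) → ℝ} (hx : x ∈ almostEntropic n)
    {t : ℝ} (ht : 0 ≤ t) : t • x ∈ almostEntropic n := by
  have hcont : Continuous (fun y : Finset (Fin n) → ℝ => t • y) := continuous_const_smul t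
  have hmaps : Set.MapsTo (fun y : Finset (Fin n) → ℝ => t • y)
      {h | IsEntropic n h} (almostEntropic n) := by
    intro y hy
    have := IsEntropic.mul_mem_almostEntropic hy ht
    have hyt : t • y = fun α => t * y α := rfl
    beta_reduce
    show t • y ∈ almostEntropic n
    rw [hyt]
    exact this
  have := map_mem_closure hcont hx hmaps
  rw [show almostEntropic n = closure {h | IsEntropic n h} from rfl] at this ⊢
  rwa [closure_closure] at this

lemma add_mem_almostEntropic {x y : Finset (Fin n) → ℝ} (hx : x ∈ almostEntropic n)
    (hy : y ∈ almostEntropic n) : x + y ∈ almostEntropic n := by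
  have := map_mem_closure₂ (f := fun a b : Finset (Fin n) → ℝ => a + b)
    (continuous_fst.add continuous_snd) hx hy
    (fun a ha b hb => Set.mem_setOf.2 ((IsEntropic.add ha hb).congr fun α => rfl))
  exact this

lemma almostEntropic_convex : Convex ℝ (almostEntropic n) := by
  intro x hx y hy a b ha hb _
  exact add_mem_almostEntropic (smul_mem_almostEntropic hx ha) (smul_mem_almostEntropic hy hb)

end Final

/-- Lemma E.1: every vector `h ∉ cl Γ_n^*` is separated from the entropic
vectors by an information inequality with integer coefficients. -/
theorem stmt13 (n : ℕ) (hn : 1 ≤ n) (h : Finset (Fin n) → ℝ)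
    (hh : h ∉ almostEntropic n) :
    ∃ c : Finset (Fin n) → ℤ,
      (∀ h₀ : Finset (Fin n) → ℝ, IsEntropic n h₀ → 0 ≤ ∑ α, (c α : ℝ) * h₀ α) ∧
      (∑ α, (c α : ℝ) * h α) < 0 := by
  classical
  obtain ⟨f, u, hfh, hfs⟩ :=
    geometric_hahn_banach_point_closed almostEntropic_convex isClosed_closure hh
  have hu0 : u < 0 := by
    have := hfs 0 zero_mem_almostEntropic
    rwa [map_zero] at this
  have hfnonneg : ∀ h₀ : Finset (Fin n) → ℝ, IsEntropic n h₀ → 0 ≤ f h₀ := by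
    intro h₀ hh₀
    by_contra hneg
    push_neg at hneg
    have hmem : h₀ ∈ almostEntropic n := subset_closure hh₀
    set t : ℝ := (u - 1) / f h₀ with htdef
    have ht0 : 0 ≤ t := by
      have hpos := div_pos (neg_pos.2 (show u - 1 < 0 by linarith)) (neg_pos.2 hneg)
      rw [neg_div_neg_eq] at hpos
      exact hpos.le
    have := hfs (t • h₀) (smul_mem_almostEntropic hmem ht0)
    rw [map_smul, smul_eq_mul, htdef, div_mul_cancel₀ _ (ne_of_lt hneg)] at this
    linarith
  set c' : Finset (Fin n) → ℝ := fun α => f (fun β => if α = β then 1 else 0) with hc'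
  have hf_eq : ∀ y : Finset (Fin n) → ℝ, f y = ∑ α, y α * c' α := by
    intro y
    conv_lhs => rw [pi_eq_sum_univ y]
    rw [map_sum]
    refine Finset.sum_congr rfl fun α _ => ?_
    rw [map_smul, smul_eq_mul]
  have hfh0 : f h < 0 := lt_trans hfh hu0
  set B : ℝ := ∑ α, |h α| with hB
  have hB0 : 0 ≤ B := Finset.sum_nonneg fun α _ => abs_nonneg _
  have hBpos : (0:ℝ) < B + 1 := by linarith
  set δ : ℝ := (-f h) / (B + 1) with hδ
  have hδpos : 0 < δ := div_pos (by linarith) hBpos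
  choose q hq1 hq2 using fun α : Finset (Fin n) =>
    exists_rat_btwn (lt_add_of_pos_right (c' α) hδpos)
  set d : ℕ := ∏ α, (q α).den with hd
  have hdpos : 0 < d := Finset.prod_pos fun α _ => (q α).pos
  have hddvd : ∀ α, (q α).den ∣ d := fun α => Finset.dvd_prod_of_mem _ (Finset.mem_univ α)
  set c : Finset (Fin n) → ℤ := fun α => (q α).num * ((d / (q α).den : ℕ) : ℤ) with hc
  have hcast : ∀ α, (c α : ℝ) = (q α : ℝ) * d := by
    intro α
    have hden : ((q α).den : ℚ) ≠ 0 := Nat.cast_ne_zero.2 (q α).den_nz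
    have h1 : ((d / (q α).den : ℕ) : ℚ) = (d : ℚ) / ((q α).den : ℚ) :=
      Nat.cast_div (hddvd α) hden
    have h2 : (c α : ℚ) = (q α) * d := by
      rw [hc]
      rw [Int.cast_mul, Int.cast_natCast, h1]
      rw [show ((q α).num : ℚ) * ((d : ℚ) / ((q α).den : ℚ))
        = (((q α).num : ℚ) / ((q α).den : ℚ)) * d from by ring, Rat.num_div_den]
    have h3 := congrArg (fun r : ℚ => (r : ℝ)) h2
    push_cast at h3
    exact h3
  refine ⟨c, ?_, ?_⟩
  · intro h₀ hh₀
    have key : 0 ≤ ∑ α, (q α : ℝ) * h₀ α := by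
      have h1 : ∑ α, c' α * h₀ α ≤ ∑ α, (q α : ℝ) * h₀ α :=
        Finset.sum_le_sum fun α _ =>
          mul_le_mul_of_nonneg_right (hq1 α).le (hh₀.nonneg α)
      have h2 : 0 ≤ f h₀ := hfnonneg h₀ hh₀
      rw [hf_eq] at h2
      calc (0:ℝ) ≤ ∑ α, h₀ α * c' α := h2
        _ = ∑ α, c' α * h₀ α := Finset.sum_congr rfl fun α _ => mul_comm _ _
        _ ≤ _ := h1
    calc (0:ℝ) ≤ (d : ℝ) * ∑ α, (q α : ℝ) * h₀ α :=
          mul_nonneg (Nat.cast_nonneg d) key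
      _ = ∑ α, (c α : ℝ) * h₀ α := by
          rw [Finset.mul_sum]
          exact Finset.sum_congr rfl fun α _ => by rw [hcast α]; ring
  · have key : ∑ α, (q α : ℝ) * h α < 0 := by
      have h1 : ∑ α, (q α : ℝ) * h α ≤ ∑ α, (c' α * h α + δ * |h α|) := by
        refine Finset.sum_le_sum fun α _ => ?_
        have habs : ((q α : ℝ) - c' α) * h α ≤ δ * |h α| := by
          calc ((q α : ℝ) - c' α) * h α ≤ |((q α : ℝ) - c' α) * h α| := le_abs_self _
            _ = |(q α : ℝ) - c' α| * |h α| := abs_mul _ _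
            _ ≤ δ * |h α| := mul_le_mul_of_nonneg_right
                (by rw [abs_of_nonneg (by linarith [hq1 α])]; linarith [hq2 α]) (abs_nonneg _)
        nlinarith [habs]
      have h2 : ∑ α, (c' α * h α + δ * |h α|) = f h + δ * B := by
        rw [Finset.sum_add_distrib, ← Finset.mul_sum, ← hB, hf_eq]
        congr 1
        exact Finset.sum_congr rfl fun α _ => mul_comm _ _
      have h3 : f h + δ * B < 0 := by
        have hcancel : δ * (B + 1) = -f h := div_mul_cancel₀ _ hBpos.ne'
        nlinarith [hδpos]
      linarith
    calc ∑ α, (c α : ℝ) * h α = (d : ℝ) * ∑ α, (q α : ℝ) * h α := by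
          rw [Finset.mul_sum]
          exact Finset.sum_congr rfl fun α _ => by rw [hcast α]; ring
      _ < 0 := mul_neg_of_pos_of_neg (by exact_mod_cast hdpos) key
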